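/- Define H(t) = (1/√(πt)) ∫_{-π/2}^{π/2} e^{-sin²φ / t} cos(2φ) dφ for t > 0. Then for every α ∈ [0, 3/2], the function t ↦ t^α H(t) is bounded on (0, ∞). -/

import Mathlib

open Real MeasureTheory

lemma stmt3_cont (t : ℝ) :
    Continuous (fun φ : ℝ => Real.exp (-(Real.sin φ)^2 / t) * Real.cos (2*φ)) := by
  fun_prop

lemma stmt3_sin_sq {φ : ℝ} (h : |φ| ≤ π/2) : (2/π)^2 * φ^2 ≤ (Real.sin φ)^2 := by
  have h1 := Real.mul_abs_le_abs_sin h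
  have h2 : (2/π * |φ|)^2 ≤ |Real.sin φ|^2 :=
    pow_le_pow_left₀ (by positivity) h1 2
  calc (2/π)^2 * φ^2 = (2/π * |φ|)^2 := by rw [mul_pow, sq_abs]
    _ ≤ |Real.sin φ|^2 := h2
    _ = (Real.sin φ)^2 := sq_abs _

lemma stmt3_cos_int : (∫ φ in (-(π/2))..(π/2), Real.cos (2*φ)) = 0 := by
  have h := intervalIntegral.integral_comp_mul_left (a := -(π/2)) (b := π/2)
    (fun x => Real.cos x) two_ne_zero
  rw [show (2:ℝ) * -(π/2) = -π by ring, show (2:ℝ) * (π/2) = π by ring,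
    integral_cos] at h
  simpa using h

lemma stmt3_small (t : ℝ) (ht : 0 < t) :
    |∫ φ in (-(π/2))..(π/2), Real.exp (-(Real.sin φ)^2 / t) * Real.cos (2*φ)|
      ≤ (π/2) * Real.sqrt (π * t) := by
  have hπ := Real.pi_pos
  set b : ℝ := (2/π)^2 / t with hb
  have hbpos : 0 < b := by positivity
  have hab : -(π/2) ≤ (π/2 : ℝ) := by linarith
  calc |∫ φ in (-(π/2))..(π/2), Real.exp (-(Real.sin φ)^2 / t) * Real.cos (2*φ)|
      ≤ ∫ φ in (-(π/2))..(π/2), |Real.exp (-(Real.sin φ)^2 / t) * Real.cos (2*φ)| :=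
        intervalIntegral.abs_integral_le_integral_abs hab
    _ ≤ ∫ φ in (-(π/2))..(π/2), Real.exp (-b * φ^2) := by
        apply intervalIntegral.integral_mono_on hab
        · exact ((stmt3_cont t).abs).intervalIntegrable _ _
        · exact (Real.continuous_exp.comp (by fun_prop)).intervalIntegrable _ _
        · intro x hx
          rw [abs_mul]
          have h1 : |Real.exp (-(Real.sin x)^2 / t)| = Real.exp (-(Real.sin x)^2 / t) :=
            abs_of_pos (Real.exp_pos _)
          have habs : |x| ≤ π/2 := abs_le.2 ⟨hx.1, hx.2⟩
          have h2 := stmt3_sin_sq habs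
          calc |Real.exp (-(Real.sin x)^2 / t)| * |Real.cos (2*x)|
              ≤ Real.exp (-(Real.sin x)^2 / t) * 1 := by
                rw [h1]; exact mul_le_mul_of_nonneg_left (abs_cos_le_one _) (Real.exp_pos _).le
            _ = Real.exp (-(Real.sin x)^2 / t) := mul_one _
            _ ≤ Real.exp (-b * x^2) := by
                apply Real.exp_le_exp.2
                have h3 : ((2/π)^2 * x^2)/t ≤ (Real.sin x)^2/t := by gcongr
                rw [hb]
                have e1 : -((2/π)^2/t) * x^2 = -(((2/π)^2 * x^2)/t) := by ring
                have e2 : -(Real.sin x)^2/t = -((Real.sin x)^2/t) := by ring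
                rw [e1, e2, neg_le_neg_iff]
                exact h3
    _ = ∫ φ in Set.Ioc (-(π/2)) (π/2), Real.exp (-b * φ^2) :=
        intervalIntegral.integral_of_le hab
    _ ≤ ∫ φ : ℝ, Real.exp (-b * φ^2) := by
        apply setIntegral_le_integral (integrable_exp_neg_mul_sq hbpos)
        exact Filter.Eventually.of_forall fun x => (Real.exp_pos _).le
    _ = Real.sqrt (π / b) := integral_gaussian b
    _ = (π/2) * Real.sqrt (π * t) := by
        rw [hb]
        rw [show π / ((2/π)^2 / t) = (π/2)^2 * (π * t) by field_simp]
        rw [Real.sqrt_mul (sq_nonneg _), Real.sqrt_sq (by positivity)]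

lemma stmt3_large (t : ℝ) (ht : 0 < t) :
    |∫ φ in (-(π/2))..(π/2), Real.exp (-(Real.sin φ)^2 / t) * Real.cos (2*φ)|
      ≤ π / t := by
  have hπ := Real.pi_pos
  have hi1 : IntervalIntegrable (fun φ : ℝ => Real.exp (-(Real.sin φ)^2 / t) * Real.cos (2*φ))
      MeasureTheory.volume (-(π/2)) (π/2) := (stmt3_cont t).intervalIntegrable _ _
  have hi2 : IntervalIntegrable (fun φ : ℝ => Real.cos (2*φ))
      MeasureTheory.volume (-(π/2)) (π/2) :=
    (by fun_prop : Continuous fun φ : ℝ => Real.cos (2*φ)).intervalIntegrable _ _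
  have key : (∫ φ in (-(π/2))..(π/2), Real.exp (-(Real.sin φ)^2 / t) * Real.cos (2*φ))
      = ∫ φ in (-(π/2))..(π/2),
          (Real.exp (-(Real.sin φ)^2 / t) - 1) * Real.cos (2*φ) := by
    have e : ∀ φ : ℝ, (Real.exp (-(Real.sin φ)^2 / t) - 1) * Real.cos (2*φ)
        = Real.exp (-(Real.sin φ)^2 / t) * Real.cos (2*φ) - Real.cos (2*φ) := fun φ => by ring
    simp only [e]
    rw [intervalIntegral.integral_sub hi1 hi2, stmt3_cos_int, sub_zero]
  rw [key]
  have hbound : ∀ x ∈ Set.uIoc (-(π/2)) (π/2),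
      ‖(Real.exp (-(Real.sin x)^2 / t) - 1) * Real.cos (2*x)‖ ≤ 1/t := by
    intro x _
    rw [Real.norm_eq_abs, abs_mul]
    have e1 : Real.exp (-(Real.sin x)^2 / t) ≤ 1 := by
      apply Real.exp_le_one_iff.2
      apply div_nonpos_of_nonpos_of_nonneg (neg_nonpos.2 (sq_nonneg _)) ht.le
    have e2 : 1 - (Real.sin x)^2/t ≤ Real.exp (-(Real.sin x)^2 / t) := by
      have h := Real.add_one_le_exp (-(Real.sin x)^2 / t)
      have h2 : -(Real.sin x)^2 / t = -((Real.sin x)^2/t) := by ring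
      rw [h2] at h ⊢
      linarith
    have e3 : |Real.exp (-(Real.sin x)^2 / t) - 1| ≤ 1/t := by
      rw [abs_sub_comm, abs_of_nonneg (by linarith)]
      have hs : (Real.sin x)^2 ≤ 1 := Real.sin_sq_le_one x
      have : (Real.sin x)^2/t ≤ 1/t := by gcongr
      linarith
    calc |Real.exp (-(Real.sin x)^2 / t) - 1| * |Real.cos (2*x)|
        ≤ (1/t) * 1 := by
          apply mul_le_mul e3 (abs_cos_le_one _) (abs_nonneg _) (by positivity)
      _ = 1/t := mul_one _
  have := intervalIntegral.norm_integral_le_of_norm_le_const hbound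
  rw [Real.norm_eq_abs] at this
  calc |∫ φ in (-(π/2))..(π/2), (Real.exp (-(Real.sin φ)^2 / t) - 1) * Real.cos (2*φ)|
      ≤ 1/t * |π/2 - -(π/2)| := this
    _ = π / t := by
        rw [abs_of_nonneg (by linarith)]
        ring

/-- For `H(t) = (1/√(πt)) ∫_{-π/2}^{π/2} e^{-sin²φ/t} cos(2φ) dφ` and `α ∈ [0, 3/2]`,
the function `t ↦ t^α H(t)` is bounded on `(0, ∞)`. -/
theorem stmt3 (H : ℝ → ℝ)
    (hH : ∀ t : ℝ, 0 < t →
      H t = (1 / Real.sqrt (π * t)) *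
        ∫ φ in (-(π/2))..(π/2), Real.exp (-(Real.sin φ)^2 / t) * Real.cos (2*φ))
    (α : ℝ) (hα : α ∈ Set.Icc (0:ℝ) (3/2)) :
    ∃ C : ℝ, ∀ t : ℝ, 0 < t → |t ^ α * H t| ≤ C := by
  obtain ⟨hα0, hα2⟩ := hα
  refine ⟨π, fun t ht => ?_⟩
  have hπ := Real.pi_pos
  have hs : 0 < Real.sqrt (π * t) := Real.sqrt_pos.2 (by positivity)
  set I : ℝ := ∫ φ in (-(π/2))..(π/2), Real.exp (-(Real.sin φ)^2 / t) * Real.cos (2*φ) with hI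
  rw [hH t ht, abs_mul, abs_mul,
    abs_of_pos (Real.rpow_pos_of_pos ht α),
    abs_of_pos (by positivity : (0:ℝ) < 1 / Real.sqrt (π * t))]
  rcases le_total t 1 with h1 | h1
  · have hb : |I| ≤ (π/2) * Real.sqrt (π * t) := stmt3_small t ht
    have hta : t ^ α ≤ 1 := Real.rpow_le_one ht.le h1 hα0
    have key : (1 / Real.sqrt (π * t)) * ((π/2) * Real.sqrt (π * t)) = π/2 := by
      field_simp
    calc t ^ α * (1 / Real.sqrt (π * t) * |I|)
        ≤ 1 * (1 / Real.sqrt (π * t) * ((π/2) * Real.sqrt (π * t))) :=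
          mul_le_mul hta (mul_le_mul_of_nonneg_left hb (by positivity))
            (by positivity) zero_le_one
      _ = π/2 := by rw [one_mul, key]
      _ ≤ π := by linarith
  · have hb : |I| ≤ π / t := stmt3_large t ht
    have hta : t ^ α ≤ t ^ ((3:ℝ)/2) := Real.rpow_le_rpow_of_exponent_le h1 hα2
    have h32 : t ^ ((3:ℝ)/2) = t * Real.sqrt t := by
      rw [show (3:ℝ)/2 = 1 + 1/2 by norm_num, Real.rpow_add ht, Real.rpow_one,
        ← Real.sqrt_eq_rpow]
    have hsplit : Real.sqrt (π * t) = Real.sqrt π * Real.sqrt t := Real.sqrt_mul hπ.le t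
    have hp0 : 0 < Real.sqrt π := Real.sqrt_pos.2 hπ
    have ha0 : 0 < Real.sqrt t := Real.sqrt_pos.2 ht
    have hp : Real.sqrt π * Real.sqrt π = π := Real.mul_self_sqrt hπ.le
    have key : t ^ ((3:ℝ)/2) * ((1 / Real.sqrt (π * t)) * (π / t)) = Real.sqrt π := by
      rw [h32, hsplit]
      field_simp
      linear_combination (-1 : ℝ) * hp
    calc t ^ α * (1 / Real.sqrt (π * t) * |I|)
        ≤ t ^ ((3:ℝ)/2) * (1 / Real.sqrt (π * t) * (π / t)) :=
          mul_le_mul hta (mul_le_mul_of_nonneg_left hb (by positivity))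
            (by positivity) (Real.rpow_pos_of_pos ht _).le
      _ = Real.sqrt π := key
      _ ≤ π := by
          have : Real.sqrt π ≤ Real.sqrt (π ^ 2) := Real.sqrt_le_sqrt (by nlinarith [Real.pi_gt_three])
          rwa [Real.sqrt_sq hπ.le] at this
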